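/- The Paley tournament PT_7 of order 7 is 4-anti-traceable but not anti-traceable; hence f(4) ≥ 8. -/

import Mathlib

variable {V : Type*}

/-- An oriented graph: no 2-cycles (and hence no loops). -/
def Oriented (A : V → V → Prop) : Prop := ∀ u v, A u v → ¬ A v u

/-- `AltPath A b l` : the consecutive vertices of `l` are joined by arcs whose
directions alternate, the first arc being forward iff `b = true`. -/
def AltPath (A : V → V → Prop) : Bool → List V → Prop
  | _, [] => True
  | _, [_] => True
  | b, x :: y :: rest => (if b then A x y else A y x) ∧ AltPath A (!b) (y :: rest)

/-- An anti-directed path: distinct vertices with alternating arcs. -/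
def IsAntiPath (A : V → V → Prop) (l : List V) : Prop :=
  l.Nodup ∧ ∃ b : Bool, AltPath A b l

/-- The induced subdigraph on the vertex set `S` has a hamiltonian anti-directed path. -/
def AntiTraceableOn [DecidableEq V] (A : V → V → Prop) (S : Finset V) : Prop :=
  ∃ l : List V, l.Nodup ∧ l.toFinset = S ∧ ∃ b : Bool, AltPath A b l

/-- The digraph has a hamiltonian anti-directed path. -/
def AntiTraceable [Fintype V] [DecidableEq V] (A : V → V → Prop) : Prop :=
  AntiTraceableOn A Finset.univ

/-- `k`-anti-traceable: order at least `k` and every induced subdigraph on `k`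
vertices has a hamiltonian anti-directed path. -/
def KAntiTraceable [Fintype V] [DecidableEq V] (k : ℕ) (A : V → V → Prop) : Prop :=
  k ≤ Fintype.card V ∧ ∀ S : Finset V, S.card = k → AntiTraceableOn A S

/-- An anti-directed cycle: a cyclic sequence of distinct vertices, of even
length at least 4, in which even-indexed vertices are sources and odd-indexed
vertices are sinks of the two incident arcs. -/
def AltCycle (A : V → V → Prop) (l : List V) : Prop :=
  l.Nodup ∧ 4 ≤ l.length ∧ l.length % 2 = 0 ∧
  ∀ i : Fin l.length,
    if i.1 % 2 = 0 then
      A (l.get i) (l.get ⟨(i.1 + 1) % l.length, Nat.mod_lt _ (Nat.zero_lt_of_lt i.2)⟩)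
    else
      A (l.get ⟨(i.1 + 1) % l.length, Nat.mod_lt _ (Nat.zero_lt_of_lt i.2)⟩) (l.get i)

instance decAltPath (A : V → V → Prop) [DecidableRel A] :
    ∀ (b : Bool) (l : List V), Decidable (AltPath A b l)
  | _, [] => isTrue trivial
  | _, [_] => isTrue trivial
  | b, _ :: y :: rest =>
    @instDecidableAnd _ _ _ (decAltPath A (!b) (y :: rest))

lemma aux_forward [DecidableEq V] (A : V → V → Prop) (L : List V) (hnd : L.Nodup)
    (S : Finset V) (hS : ∀ x, x ∈ L ↔ x ∈ S) (h : AntiTraceableOn A S) :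
    ∃ l ∈ L.permutations', ∃ b, AltPath A b l := by
  obtain ⟨l, hlnd, hfs, hb⟩ := h
  refine ⟨l, ?_, hb⟩
  rw [List.mem_permutations']
  apply List.perm_of_nodup_nodup_toFinset_eq hlnd hnd
  rw [hfs]
  ext x
  simp [hS x]

lemma aux_backward [DecidableEq V] (A : V → V → Prop) (L : List V) (hnd : L.Nodup)
    (S : Finset V) (hS : ∀ x, x ∈ L ↔ x ∈ S)
    (h : ∃ l ∈ L.permutations', ∃ b, AltPath A b l) :
    AntiTraceableOn A S := by
  obtain ⟨l, hmem, hb⟩ := h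
  rw [List.mem_permutations'] at hmem
  refine ⟨l, hmem.nodup_iff.mpr hnd, ?_, hb⟩
  ext x
  rw [List.mem_toFinset, hmem.mem_iff, hS x]

/-- The arcs among `{a,b,c}` form a subset of the arcs of a directed triangle. -/
def SubDirTriangle (A : V → V → Prop) (a b c : V) : Prop :=
  (¬ A b a ∧ ¬ A c b ∧ ¬ A a c) ∨ (¬ A a b ∧ ¬ A b c ∧ ¬ A c a)

set_option maxRecDepth 10000 in
theorem stmt13 :
    KAntiTraceable 4 (fun i j : ZMod 7 => j - i = 1 ∨ j - i = 2 ∨ j - i = 4) ∧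
    ¬ AntiTraceable (fun i j : ZMod 7 => j - i = 1 ∨ j - i = 2 ∨ j - i = 4) := by
  set A := (fun i j : ZMod 7 => j - i = 1 ∨ j - i = 2 ∨ j - i = 4) with hA
  set L : List (ZMod 7) := [0, 1, 2, 3, 4, 5, 6] with hL
  have hnd : L.Nodup := by decide
  constructor
  · constructor
    · decide
    · have key : ∀ l ∈ L.sublists, l.length = 4 →
          ∃ l' ∈ l.permutations', ∃ b, AltPath A b l' := by decide
      intro S hS
      set l := L.filter (· ∈ S) with hl
      have hsub : l.Sublist L := List.filter_sublist
      have hlnd : l.Nodup := hsub.nodup hnd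
      have hfs : l.toFinset = S := by
        ext x
        simp only [hl, List.mem_toFinset, List.mem_filter, decide_eq_true_eq]
        exact ⟨fun h => h.2, fun h => ⟨(by decide : ∀ y : ZMod 7, y ∈ L) x, h⟩⟩
      have hlen : l.length = 4 := by
        rw [← List.toFinset_card_of_nodup hlnd, hfs, hS]
      obtain ⟨l', hmem, hb⟩ := key l (List.mem_sublists.mpr hsub) hlen
      rw [List.mem_permutations'] at hmem
      refine ⟨l', hmem.nodup_iff.mpr hlnd, ?_, hb⟩
      rw [← hfs]
      ext x
      rw [List.mem_toFinset, List.mem_toFinset, hmem.mem_iff]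
  · intro h
    obtain ⟨l, hmem, b, hb⟩ := aux_forward A L hnd Finset.univ (by decide) h
    rw [List.mem_permutations'] at hmem
    have key2 : ∀ a ∈ L, ∀ c ∈ L.erase a, ∀ l ∈ ((L.erase a).erase c).permutations',
        ∀ b : Bool, ¬ AltPath A b (a :: c :: l) := by decide
    match l, hmem, hb with
    | [], hmem, _ => simpa [hL] using hmem.length_eq
    | [_], hmem, _ => simpa [hL] using hmem.length_eq
    | a :: c :: rest, hmem, hb =>
      have ha : a ∈ L := hmem.mem_iff.mp (by simp)
      have hc : c ∈ L.erase a := by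
        have h1 : (a :: c :: rest).erase a = c :: rest := by
          simp [List.erase_cons_head]
        have := (hmem.erase a).mem_iff.mp (h1 ▸ (by simp : c ∈ c :: rest))
        exact this
      have hrest : rest ∈ ((L.erase a).erase c).permutations' := by
        rw [List.mem_permutations']
        have h1 : (a :: c :: rest).erase a = c :: rest := List.erase_cons_head ..
        have h2 : (c :: rest).erase c = rest := List.erase_cons_head ..
        have := (hmem.erase a).erase c
        rwa [h1, h2] at this
      exact key2 a ha c hc rest hrest b hb
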